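/- Fix real numbers x* and C. Let x : ℝ → ℝ be defined by x(t) = a t² + b t with a = 3x* − 6C and b = 6C − 2x*. Then x(0) = 0, x(1) = x*, and ∫₀¹ x(t) dt = C; moreover, for every continuously differentiable function y : ℝ → ℝ satisfying y(0) = 0, y(1) = x* and ∫₀¹ y(t) dt = C, we have ∫₀¹ (x'(t))² dt ≤ ∫₀¹ (y'(t))² dt. That is, the quadratic trajectory x is the global minimizer of the control energy ∫₀¹ (ẏ)² among all trajectories with the prescribed endpoint and integral constraint. -/

import Mathlib

/-- **The quadratic trajectory is the minimum-energy driver trajectory.**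
With `a = 3x* − 6C`, `b = 6C − 2x*`, the trajectory `x(t) = a t² + b t` satisfies
`x(0) = 0`, `x(1) = x*`, `∫₀¹ x = C`, and minimizes the energy `∫₀¹ (ẏ)²` among all
`C¹` trajectories `y` with `y(0) = 0`, `y(1) = x*`, `∫₀¹ y = C`. -/
theorem quadratic_trajectory_minimizes_energy
    (xs C a b : ℝ) (ha : a = 3 * xs - 6 * C) (hb : b = 6 * C - 2 * xs)
    (x : ℝ → ℝ) (hx : ∀ t, x t = a * t ^ 2 + b * t) :
    x 0 = 0 ∧ x 1 = xs ∧ (∫ t in (0:ℝ)..1, x t) = C ∧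
      ∀ y : ℝ → ℝ, ContDiff ℝ 1 y → y 0 = 0 → y 1 = xs →
        (∫ t in (0:ℝ)..1, y t) = C →
        (∫ t in (0:ℝ)..1, (deriv x t) ^ 2) ≤ ∫ t in (0:ℝ)..1, (deriv y t) ^ 2 := by
  have hxe : x = fun t => a * t ^ 2 + b * t := funext hx
  subst hxe
  -- derivative of x
  have hd : ∀ t : ℝ, HasDerivAt (fun t => a * t ^ 2 + b * t) (2 * a * t + b) t := by
    intro t
    have h1 : HasDerivAt (fun t : ℝ => a * t ^ 2) (a * (2 * t)) t := by
      simpa using ((hasDerivAt_pow 2 t).const_mul a)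
    have h2 : HasDerivAt (fun t : ℝ => b * t) (b * 1) t := (hasDerivAt_id t).const_mul b
    have := h1.add h2
    exact this.congr_deriv (by ring)
  have hderivx : ∀ t : ℝ, deriv (fun t => a * t ^ 2 + b * t) t = 2 * a * t + b :=
    fun t => (hd t).deriv
  have hcf : Continuous fun t : ℝ => 2 * a * t + b := by fun_prop
  -- key cross-term computation by integration by parts
  have key : ∀ y : ℝ → ℝ, (∀ t, HasDerivAt y (deriv y t) t) → Continuous (deriv y) →
      y 0 = 0 → y 1 = xs → (∫ t in (0:ℝ)..1, y t) = C →
      (∫ t in (0:ℝ)..1, (2 * a * t + b) * deriv y t) = (2 * a + b) * xs - 2 * a * C := by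
    intro y hdy hcdy hy0 hy1 hyint
    have hu : ∀ t ∈ Set.uIcc (0:ℝ) 1, HasDerivAt (fun t : ℝ => 2 * a * t + b) (2 * a) t := by
      intro t _
      simpa using ((hasDerivAt_id t).const_mul (2 * a)).add_const b
    have hv : ∀ t ∈ Set.uIcc (0:ℝ) 1, HasDerivAt y (deriv y t) t := fun t _ => hdy t
    have hiu : IntervalIntegrable (fun _ : ℝ => 2 * a) MeasureTheory.volume 0 1 :=
      intervalIntegrable_const
    have hiv : IntervalIntegrable (deriv y) MeasureTheory.volume 0 1 :=
      hcdy.intervalIntegrable 0 1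
    rw [intervalIntegral.integral_mul_deriv_eq_deriv_mul hu hv hiu hiv]
    rw [intervalIntegral.integral_const_mul, hyint, hy0, hy1]
    ring
  have hxc : Continuous (deriv fun t : ℝ => a * t ^ 2 + b * t) := by
    have : (deriv fun t : ℝ => a * t ^ 2 + b * t) = fun t => 2 * a * t + b :=
      funext hderivx
    rw [this]; exact hcf
  refine ⟨by simp, by simp [ha, hb]; ring, ?_, ?_⟩
  · have h1 : (∫ t in (0:ℝ)..1, a * t ^ 2) = a / 3 := by
      rw [intervalIntegral.integral_const_mul, integral_pow]; norm_num; ring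
    have h2 : (∫ t in (0:ℝ)..1, b * t) = b / 2 := by
      rw [intervalIntegral.integral_const_mul, integral_id]; norm_num; ring
    have hia : IntervalIntegrable (fun t : ℝ => a * t ^ 2) MeasureTheory.volume 0 1 :=
      (by fun_prop : Continuous fun t : ℝ => a * t ^ 2).intervalIntegrable 0 1
    have hib : IntervalIntegrable (fun t : ℝ => b * t) MeasureTheory.volume 0 1 :=
      (by fun_prop : Continuous fun t : ℝ => b * t).intervalIntegrable 0 1
    have hadd := intervalIntegral.integral_add hia hib
    rw [hadd, h1, h2, ha, hb]; ring
  · intro y hy hy0 hy1 hyint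
    have hdy : ∀ t, HasDerivAt y (deriv y t) t :=
      fun t => ((hy.differentiable one_ne_zero) t).hasDerivAt
    have hcdy : Continuous (deriv y) := hy.continuous_deriv le_rfl
    -- cross terms
    have hKy := key y hdy hcdy hy0 hy1 hyint
    have hdx : ∀ t, HasDerivAt (fun t : ℝ => a * t ^ 2 + b * t)
        (deriv (fun t : ℝ => a * t ^ 2 + b * t) t) t := by
      intro t; rw [hderivx t]; exact hd t
    have hx0 : (fun t : ℝ => a * t ^ 2 + b * t) 0 = 0 := by simp
    have hx1 : (fun t : ℝ => a * t ^ 2 + b * t) 1 = xs := by simp [ha, hb]; ring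
    have hxint : (∫ t in (0:ℝ)..1, (fun t : ℝ => a * t ^ 2 + b * t) t) = C := by
      have h1 : (∫ t in (0:ℝ)..1, a * t ^ 2) = a / 3 := by
        rw [intervalIntegral.integral_const_mul, integral_pow]; norm_num; ring
      have h2 : (∫ t in (0:ℝ)..1, b * t) = b / 2 := by
        rw [intervalIntegral.integral_const_mul, integral_id]; norm_num; ring
      have hia : IntervalIntegrable (fun t : ℝ => a * t ^ 2) MeasureTheory.volume 0 1 :=
        (by fun_prop : Continuous fun t : ℝ => a * t ^ 2).intervalIntegrable 0 1
      have hib : IntervalIntegrable (fun t : ℝ => b * t) MeasureTheory.volume 0 1 :=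
        (by fun_prop : Continuous fun t : ℝ => b * t).intervalIntegrable 0 1
      have hadd := intervalIntegral.integral_add hia hib
      simp only []
      rw [hadd, h1, h2, ha, hb]; ring
    have hKx : (∫ t in (0:ℝ)..1, (2 * a * t + b) * (2 * a * t + b))
        = (2 * a + b) * xs - 2 * a * C := by
      have := key (fun t : ℝ => a * t ^ 2 + b * t) hdx (by exact hxc) hx0 hx1 hxint
      rw [← this]
      apply intervalIntegral.integral_congr
      intro t _
      simp only [hderivx]
    set K : ℝ := (2 * a + b) * xs - 2 * a * C with hK
    -- integrability facts
    have hi1 : IntervalIntegrable (fun t => (deriv y t - (2 * a * t + b)) ^ 2)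
        MeasureTheory.volume 0 1 := by
      apply Continuous.intervalIntegrable
      exact ((hcdy.sub hcf).pow 2)
    have hi2 : IntervalIntegrable (fun t => 2 * ((2 * a * t + b) * deriv y t))
        MeasureTheory.volume 0 1 := by
      apply Continuous.intervalIntegrable
      exact (continuous_const.mul (hcf.mul hcdy))
    have hi3 : IntervalIntegrable (fun t => (2 * a * t + b) * (2 * a * t + b))
        MeasureTheory.volume 0 1 := by
      apply Continuous.intervalIntegrable
      exact hcf.mul hcf
    -- decompose the energy of y
    have hdecomp : (∫ t in (0:ℝ)..1, (deriv y t) ^ 2)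
        = (∫ t in (0:ℝ)..1, (deriv y t - (2 * a * t + b)) ^ 2)
          + ((∫ t in (0:ℝ)..1, 2 * ((2 * a * t + b) * deriv y t))
            - (∫ t in (0:ℝ)..1, (2 * a * t + b) * (2 * a * t + b))) := by
      rw [← intervalIntegral.integral_sub hi2 hi3,
          ← intervalIntegral.integral_add hi1 (hi2.sub hi3)]
      apply intervalIntegral.integral_congr
      intro t _
      simp only []
      ring
    have h2K : (∫ t in (0:ℝ)..1, 2 * ((2 * a * t + b) * deriv y t)) = 2 * K := by
      rw [intervalIntegral.integral_const_mul, hKy]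
    have hEx : (∫ t in (0:ℝ)..1, (deriv (fun t : ℝ => a * t ^ 2 + b * t) t) ^ 2) = K := by
      rw [← hKx]
      apply intervalIntegral.integral_congr
      intro t _
      simp only [hderivx]; ring
    have hnonneg : 0 ≤ ∫ t in (0:ℝ)..1, (deriv y t - (2 * a * t + b)) ^ 2 := by
      apply intervalIntegral.integral_nonneg (by norm_num)
      intro t _
      positivity
    rw [hEx, hdecomp, h2K, hKx]
    linarith
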